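/- No future-directed Lipschitz timelike curve for g = −dt² + (1 + sqrt((t−|x|)₊))dx² starting at the origin reaches a point of A = {(t,x) : x > 0, 0 < t − x < f⁻¹(x)}; i.e., A ∩ I⁺(0) = ∅. -/

import Mathlib

open MeasureTheory intervalIntegral Set Filter Topology

noncomputable def rho (t x : ℝ) : ℝ := 1 + Real.sqrt (max (t - |x|) 0)

noncomputable def f (y : ℝ) : ℝ :=
  4 / 3 * ((1 + Real.sqrt y) ^ ((3 : ℝ) / 2) - 1) + 2 * Real.sqrt y

lemma lip_abs_deriv_le {φ : ℝ → ℝ} {K : NNReal} (h : LipschitzWith K φ) (x : ℝ) :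
    |deriv φ x| ≤ K := by
  by_cases hd : DifferentiableAt ℝ φ x
  · have hs : Tendsto (fun y => |slope φ x y|) (𝓝[≠] x) (𝓝 |deriv φ x|) :=
      ((hasDerivAt_iff_tendsto_slope.1 hd.hasDerivAt)).abs
    refine le_of_tendsto hs ?_
    filter_upwards [self_mem_nhdsWithin] with y hy
    have h1 : |φ y - φ x| ≤ K * |y - x| := by
      have := h.dist_le_mul y x
      rwa [Real.dist_eq, Real.dist_eq] at this
    have h2 : (0:ℝ) < |y - x| := by
      rw [abs_pos, sub_ne_zero]; exact hy
    rw [slope_def_field, div_eq_mul_inv, abs_mul, abs_inv]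
    rw [mul_inv_le_iff₀ h2]
    exact h1
  · rw [deriv_zero_of_not_differentiableAt hd]
    simpa using K.2

-- |deriv |φ|| ≤ |deriv φ| at points of differentiability of both
lemma abs_deriv_abs_le {φ : ℝ → ℝ} {x : ℝ} {b c : ℝ}
    (h1 : HasDerivAt φ b x) (h2 : HasDerivAt (fun y => |φ y|) c x) : |c| ≤ |b| := by
  have t1 : Tendsto (fun y => |slope φ x y|) (𝓝[≠] x) (𝓝 |b|) :=
    (hasDerivAt_iff_tendsto_slope.1 h1).abs
  have t2 : Tendsto (fun y => |slope (fun y => |φ y|) x y|) (𝓝[≠] x) (𝓝 |c|) :=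
    (hasDerivAt_iff_tendsto_slope.1 h2).abs
  refine le_of_tendsto_of_tendsto t2 t1 ?_
  filter_upwards [self_mem_nhdsWithin] with y hy
  simp only [slope_def_field, div_eq_mul_inv, abs_mul]
  exact mul_le_mul_of_nonneg_right (abs_abs_sub_abs_le_abs_sub _ _) (abs_nonneg _)

lemma lip_deriv_intervalIntegrable {φ : ℝ → ℝ} {K : NNReal} (h : LipschitzWith K φ)
    (a b : ℝ) : IntervalIntegrable (deriv φ) volume a b := by
  rw [intervalIntegrable_iff]
  have hK : IntegrableOn (fun _ : ℝ => (K : ℝ)) (Set.uIoc a b) volume :=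
    integrableOn_const (measure_Ioc_lt_top).ne
  exact hK.mono' ((measurable_deriv φ).aestronglyMeasurable)
    (ae_of_all _ fun x => by simpa using lip_abs_deriv_le h x)

lemma seq_tendsto_punct (x : ℝ) :
    Tendsto (fun n : ℕ => x + 1 / (n + 1)) atTop (𝓝[≠] x) := by
  apply tendsto_nhdsWithin_of_tendsto_nhds_of_eventually_within
  · have : Tendsto (fun n : ℕ => 1 / ((n : ℝ) + 1)) atTop (𝓝 0) :=
      tendsto_one_div_add_atTop_nhds_zero_nat
    simpa using tendsto_const_nhds.add this
  · filter_upwards with n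
    have : (0:ℝ) < 1 / ((n:ℝ) + 1) := by positivity
    simp only [Set.mem_compl_iff, Set.mem_singleton_iff]
    intro hc
    nlinarith [hc]

lemma lip_ftc {φ : ℝ → ℝ} {K : NNReal} (h : LipschitzWith K φ) {a b : ℝ} (hab : a ≤ b) :
    ∫ s in a..b, deriv φ s = φ b - φ a := by
  set hn : ℕ → ℝ := fun n => 1 / (n + 1) with hhn
  have hnpos : ∀ n : ℕ, (0:ℝ) < hn n := fun n => by positivity
  set F : ℕ → ℝ → ℝ := fun n x => (φ (x + hn n) - φ x) / hn n with hF
  have hcont : Continuous φ := h.continuous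
  -- DCT : ∫ F n → ∫ deriv φ
  have step1 : Tendsto (fun n => ∫ x in a..b, F n x) atTop (𝓝 (∫ x in a..b, deriv φ x)) := by
    apply intervalIntegral.tendsto_integral_filter_of_dominated_convergence (fun _ => (K : ℝ))
    · filter_upwards with n
      exact (((hcont.comp (continuous_id.add continuous_const)).sub hcont).div_const _).aestronglyMeasurable
    · filter_upwards with n
      filter_upwards with x _
      have h1 : |φ (x + hn n) - φ x| ≤ K * hn n := by
        have := h.dist_le_mul (x + hn n) x
        rw [Real.dist_eq, Real.dist_eq] at this
        simpa [abs_of_pos (hnpos n)] using this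
      rw [Real.norm_eq_abs, hF, abs_div, abs_of_pos (hnpos n),
        div_le_iff₀ (hnpos n)]
      exact h1
    · exact intervalIntegrable_const
    · have hae : ∀ᵐ x : ℝ, DifferentiableAt ℝ φ x := h.ae_differentiableAt
      filter_upwards [hae] with x hx _
      have hs : Tendsto (slope φ x) (𝓝[≠] x) (𝓝 (deriv φ x)) :=
        hasDerivAt_iff_tendsto_slope.1 hx.hasDerivAt
      have := hs.comp (seq_tendsto_punct x)
      convert this using 2 with n
      simp [hF, slope_def_field, Function.comp, hhn, div_eq_mul_inv]
  -- Explicit computation of ∫ F n and its limit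
  have hint : ∀ c d : ℝ, IntervalIntegrable φ volume c d := fun c d =>
    hcont.intervalIntegrable c d
  set Ψ : ℝ → ℝ := fun u => ∫ x in a..u, φ x with hΨ
  have key : ∀ n, ∫ x in a..b, F n x
      = (Ψ (b + hn n) - Ψ b) / hn n - (Ψ (a + hn n) - Ψ a) / hn n := by
    intro n
    have e1 : ∫ x in a..b, F n x = (∫ x in a..b, (φ (x + hn n) - φ x)) / hn n := by
      rw [← intervalIntegral.integral_div]
    have e2 : ∫ x in a..b, (φ (x + hn n) - φ x)
        = (∫ x in a + hn n..b + hn n, φ x) - ∫ x in a..b, φ x := by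
      have hc1 : Continuous fun x : ℝ => φ (x + hn n) :=
        hcont.comp (continuous_id.add continuous_const)
      rw [intervalIntegral.integral_sub (hc1.intervalIntegrable _ _) (hint a b)]
      congr 1
      exact intervalIntegral.integral_comp_add_right _ _
    have e3 : (∫ x in a + hn n..b + hn n, φ x)
        = Ψ (b + hn n) - Ψ (a + hn n) := by
      have h1 : Ψ (a + hn n) + ∫ x in a + hn n..b + hn n, φ x = Ψ (b + hn n) :=
        intervalIntegral.integral_add_adjacent_intervals (hint _ _) (hint _ _)
      linarith
    have e4 : Ψ b = ∫ x in a..b, φ x := rfl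
    have e5 : Ψ a = 0 := intervalIntegral.integral_same
    rw [e1, e2, e3, e4]
    rw [e5]
    ring
  have hD : ∀ c : ℝ, Tendsto (fun n => (Ψ (c + hn n) - Ψ c) / hn n) atTop (𝓝 (φ c)) := by
    intro c
    have hd : HasDerivAt Ψ (φ c) c :=
      intervalIntegral.integral_hasDerivAt_right (hint a c)
        (hcont.stronglyMeasurableAtFilter _ _) hcont.continuousAt
    have hs : Tendsto (slope Ψ c) (𝓝[≠] c) (𝓝 (φ c)) :=
      hasDerivAt_iff_tendsto_slope.1 hd
    have := hs.comp (seq_tendsto_punct c)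
    convert this using 2 with n
    simp [slope_def_field, Function.comp, hhn, div_eq_mul_inv]
  have step2 : Tendsto (fun n => ∫ x in a..b, F n x) atTop (𝓝 (φ b - φ a)) := by
    simp only [key]
    exact (hD b).sub (hD a)
  exact tendsto_nhds_unique step1 step2


noncomputable def derivF (y : ℝ) : ℝ :=
  (Real.sqrt (1 + Real.sqrt y) + 1) / Real.sqrt y

lemma f_zero : f 0 = 0 := by
  simp [f, Real.sqrt_zero, Real.one_rpow]

lemma f_continuous : Continuous f := by
  apply Continuous.add
  · apply Continuous.mul continuous_const
    apply Continuous.sub _ continuous_const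
    exact (continuous_const.add Real.continuous_sqrt).rpow_const
      (fun y => Or.inl (by show (1 + Real.sqrt y) ≠ 0; positivity))
  · exact continuous_const.mul Real.continuous_sqrt

lemma hasDerivAt_f {y : ℝ} (hy : 0 < y) : HasDerivAt f (derivF y) y := by
  have hsy : (0:ℝ) < Real.sqrt y := Real.sqrt_pos.2 hy
  have h1 : HasDerivAt Real.sqrt (1 / (2 * Real.sqrt y)) y := Real.hasDerivAt_sqrt hy.ne'
  have h2 : HasDerivAt (fun u : ℝ => 1 + Real.sqrt u) (1 / (2 * Real.sqrt y)) y :=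
    h1.const_add 1
  have h3 : HasDerivAt (fun u : ℝ => u ^ ((3:ℝ)/2))
      (((3:ℝ)/2) * (1 + Real.sqrt y) ^ ((3:ℝ)/2 - 1)) (1 + Real.sqrt y) :=
    Real.hasDerivAt_rpow_const (Or.inl (by positivity))
  have h4 := h3.comp y h2
  have h5 : HasDerivAt f _ y := ((h4.sub_const 1).const_mul (4/3 : ℝ)).add (h1.const_mul 2)
  convert h5 using 1
  have e1 : ((3:ℝ)/2 - 1) = (1:ℝ)/2 := by norm_num
  have e2 : (1 + Real.sqrt y) ^ ((1:ℝ)/2) = Real.sqrt (1 + Real.sqrt y) :=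
    (Real.sqrt_eq_rpow _).symm
  rw [derivF, e1, e2]
  field_simp
  ring

lemma derivF_pos {y : ℝ} (hy : 0 < y) : 0 < derivF y := by
  have hsy : (0:ℝ) < Real.sqrt y := Real.sqrt_pos.2 hy
  apply div_pos _ hsy
  positivity

lemma derivF_eq_inv {y : ℝ} (hy : 0 < y) :
    derivF y = 1 / (Real.sqrt (1 + Real.sqrt y) - 1) := by
  have hsy : (0:ℝ) < Real.sqrt y := Real.sqrt_pos.2 hy
  have h1 : Real.sqrt (1 + Real.sqrt y) ^ 2 = 1 + Real.sqrt y :=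
    Real.sq_sqrt (by positivity)
  have h2 : 1 < Real.sqrt (1 + Real.sqrt y) := by
    have : (1:ℝ) < 1 + Real.sqrt y := by linarith
    have := Real.lt_sqrt (x := 1) (y := 1 + Real.sqrt y) (by norm_num) |>.2 (by nlinarith)
    simpa using this
  rw [derivF, eq_div_iff (by linarith), div_mul_eq_mul_div, div_eq_iff hsy.ne']
  nlinarith [h1]

lemma derivF_anti {z y : ℝ} (hz : 0 < z) (hzy : z ≤ y) : derivF y ≤ derivF z := by
  have hy : 0 < y := lt_of_lt_of_le hz hzy
  have h2 : ∀ w : ℝ, 0 < w → 1 < Real.sqrt (1 + Real.sqrt w) := by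
    intro w hw
    have hsw : (0:ℝ) < Real.sqrt w := Real.sqrt_pos.2 hw
    have := Real.lt_sqrt (x := 1) (y := 1 + Real.sqrt w) (by norm_num) |>.2 (by nlinarith)
    simpa using this
  rw [derivF_eq_inv hy, derivF_eq_inv hz]
  apply one_div_le_one_div_of_le
  · linarith [h2 z hz]
  · have : Real.sqrt (1 + Real.sqrt z) ≤ Real.sqrt (1 + Real.sqrt y) := by
      apply Real.sqrt_le_sqrt
      have := Real.sqrt_le_sqrt hzy
      linarith
    linarith

lemma f_strictMonoOn : StrictMonoOn f (Set.Ici 0) := by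
  apply strictMonoOn_of_deriv_pos (convex_Ici 0) (f_continuous.continuousOn)
  intro x hx
  rw [interior_Ici] at hx
  rw [(hasDerivAt_f hx).deriv]
  exact derivF_pos hx

-- f is Lipschitz on [z, ∞) with constant derivF z
lemma f_lipschitzOnWith {z : ℝ} (hz : 0 < z) :
    LipschitzOnWith (Real.toNNReal (derivF z)) f (Set.Ici z) := by
  rw [lipschitzOnWith_iff_dist_le_mul]
  intro u hu v hv
  wlog huv : v ≤ u generalizing u v
  · rw [dist_comm, dist_comm u v]
    exact this v hv u hu (le_of_not_ge huv)
  have hvpos : 0 < v := lt_of_lt_of_le hz hv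
  have key : f u - f v = ∫ s in v..u, derivF s := by
    rw [intervalIntegral.integral_eq_sub_of_hasDerivAt]
    · intro x hx
      rw [Set.uIcc_of_le huv] at hx
      exact hasDerivAt_f (lt_of_lt_of_le hvpos hx.1)
    · apply ContinuousOn.intervalIntegrable
      rw [Set.uIcc_of_le huv]
      apply ContinuousOn.div
      · apply Continuous.continuousOn
        exact (Real.continuous_sqrt.comp (continuous_const.add Real.continuous_sqrt)).add
          continuous_const
      · exact Real.continuous_sqrt.continuousOn
      · intro x hx
        exact (Real.sqrt_pos.2 (lt_of_lt_of_le hvpos hx.1)).ne'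
  have hbd : ∫ s in v..u, derivF s ≤ derivF z * (u - v) := by
    have : ∫ s in v..u, derivF s ≤ ∫ s in v..u, derivF z := by
      apply intervalIntegral.integral_mono_on huv
      · -- integrability of derivF on [v,u]
        apply ContinuousOn.intervalIntegrable
        rw [Set.uIcc_of_le huv]
        apply ContinuousOn.div
        · exact ((Real.continuous_sqrt.comp (continuous_const.add Real.continuous_sqrt)).add
            continuous_const).continuousOn
        · exact Real.continuous_sqrt.continuousOn
        · intro x hx
          exact (Real.sqrt_pos.2 (lt_of_lt_of_le hvpos hx.1)).ne'
      · exact intervalIntegrable_const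
      · intro x hx
        exact derivF_anti hz (le_trans hv hx.1)
    simpa [mul_comm] using this
  have hnn : 0 ≤ ∫ s in v..u, derivF s := by
    apply intervalIntegral.integral_nonneg huv
    intro x hx
    exact (derivF_pos (lt_of_lt_of_le hvpos hx.1)).le
  rw [Real.dist_eq, Real.dist_eq]
  rw [abs_of_nonneg (by linarith : (0:ℝ) ≤ f u - f v), abs_of_nonneg (by linarith : (0:ℝ) ≤ u - v)]
  rw [Real.coe_toNNReal _ (derivF_pos hz).le]
  linarith [key, hbd]

lemma lip_comp {C D : NNReal} {F g : ℝ → ℝ} {t : Set ℝ} (hF : LipschitzOnWith C F t)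
    (hg : LipschitzWith D g) (hm : ∀ s, g s ∈ t) : LipschitzWith (C * D) (F ∘ g) := by
  rw [← lipschitzOnWith_univ]
  exact hF.comp (lipschitzOnWith_univ.2 hg) (fun x _ => hm x)

lemma sqrt_one_add_gt {z : ℝ} (hz : 0 < z) : 1 < Real.sqrt (1 + Real.sqrt z) := by
  have hsz : (0:ℝ) < Real.sqrt z := Real.sqrt_pos.2 hz
  have := Real.lt_sqrt (x := 1) (y := 1 + Real.sqrt z) (by norm_num) |>.2 (by nlinarith)
  simpa using this

lemma derivF_identity {z : ℝ} (hz : 0 < z) :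
    (Real.sqrt (1 + Real.sqrt z) - 1) * derivF z = 1 := by
  have h2 := sqrt_one_add_gt hz
  rw [derivF_eq_inv hz, mul_one_div, div_self (by linarith)]

lemma key_ineq {z a b c : ℝ} (hz : 0 < z) (ha : 0 < a)
    (htl : (1 + Real.sqrt z) * b ^ 2 < a ^ 2) (hcb : |c| ≤ |b|) :
    c ≤ derivF z * (a - c) := by
  set S := Real.sqrt (1 + Real.sqrt z) with hS
  have hS1 : 1 < S := sqrt_one_add_gt hz
  have hSb : S * |b| < a := by
    have h1 : Real.sqrt ((1 + Real.sqrt z) * b ^ 2) < Real.sqrt (a ^ 2) :=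
      Real.sqrt_lt_sqrt (by positivity) htl
    rw [Real.sqrt_mul (by positivity) _, Real.sqrt_sq_eq_abs, Real.sqrt_sq ha.le] at h1
    exact h1
  rcases le_or_gt c 0 with hc | hc
  · have : 0 < a - c := by linarith
    nlinarith [derivF_pos hz]
  · have hSc : S * c < a := by
      have : S * c ≤ S * |b| := by
        have : c ≤ |b| := le_trans (le_abs_self c) hcb
        nlinarith
      linarith
    have h3 : (S - 1) * c < a - c := by nlinarith
    have h4 := derivF_identity hz
    have h5 := derivF_pos hz
    calc c = derivF z * ((S - 1) * c) := by rw [show derivF z * ((S-1)*c) = ((S-1) * derivF z) * c by ring, h4, one_mul]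
    _ ≤ derivF z * (a - c) := by nlinarith

/-- no future-directed Lipschitz timelike curve starting at the
origin reaches a point of A = {(t,x) : x > 0, 0 < t − x < f⁻¹(x)};
i.e. A ∩ I⁺(0) = ∅. -/
theorem A_disjoint_chronological_future (finv : ℝ → ℝ)
    (h_nonneg : ∀ s ∈ Set.Ici (0 : ℝ), finv s ∈ Set.Ici (0 : ℝ))
    (h_left : ∀ t ∈ Set.Ici (0 : ℝ), finv (f t) = t)
    (h_right : ∀ s ∈ Set.Ici (0 : ℝ), f (finv s) = s) :
    ∀ p : ℝ × ℝ, 0 < p.2 → 0 < p.1 - p.2 → p.1 - p.2 < finv p.2 →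
      ¬ ∃ (T : ℝ) (γ : ℝ → ℝ × ℝ) (K : NNReal), 0 < T ∧
        LipschitzOnWith K γ (Set.Icc 0 T) ∧
        γ 0 = (0, 0) ∧ γ T = p ∧
        (∀ᵐ s ∂(MeasureTheory.volume.restrict (Set.Icc (0 : ℝ) T)),
          0 < deriv (fun s => (γ s).1) s ∧
          -(deriv (fun s => (γ s).1) s) ^ 2 +
            rho (γ s).1 (γ s).2 * (deriv (fun s => (γ s).2) s) ^ 2 < 0) := by
  intro p hx ht1 ht2
  rintro ⟨T, γ, K, hT, hlip, h0, hTp, hae⟩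
  -- Lipschitz components and extensions
  have hA0 : LipschitzOnWith (1 * K) (fun s => (γ s).1) (Set.Icc 0 T) :=
    LipschitzWith.prod_fst.comp_lipschitzOnWith hlip
  have hB0 : LipschitzOnWith (1 * K) (fun s => (γ s).2) (Set.Icc 0 T) :=
    LipschitzWith.prod_snd.comp_lipschitzOnWith hlip
  obtain ⟨A, hA, hAeq⟩ := hA0.extend_real
  obtain ⟨B, hB, hBeq⟩ := hB0.extend_real
  set Babs : ℝ → ℝ := fun s => |B s| with hBabsdef
  have hBabs : LipschitzWith (1 * (1 * K)) Babs := by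
    have := lipschitzWith_one_norm.comp hB
    simpa [Babs, Real.norm_eq_abs, Function.comp_def] using this
  set Z : ℝ → ℝ := fun s => A s - Babs s with hZdef
  have hZ : LipschitzWith ((1 * K) + 1 * (1 * K)) Z := hA.sub hBabs
  -- endpoints
  have h00 : (0:ℝ) ∈ Set.Icc (0:ℝ) T := Set.left_mem_Icc.2 hT.le
  have hTT : T ∈ Set.Icc (0:ℝ) T := Set.right_mem_Icc.2 hT.le
  have hA0v : A 0 = 0 := by
    have := (hAeq h00).symm
    simpa [h0] using this
  have hB0v : B 0 = 0 := by
    have := (hBeq h00).symm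
    simpa [h0] using this
  have hATv : A T = p.1 := by
    have := (hAeq hTT).symm
    simpa [hTp] using this
  have hBTv : B T = p.2 := by
    have := (hBeq hTT).symm
    simpa [hTp] using this
  have hZ0 : Z 0 = 0 := by simp [Z, Babs, hA0v, hB0v]
  have hZT : Z T = p.1 - p.2 := by
    simp [Z, Babs, hATv, hBTv, abs_of_pos hx]
  -- a.e. derivative package
  have hrad : ∀ᵐ s ∂(volume : Measure ℝ),
      DifferentiableAt ℝ A s ∧ DifferentiableAt ℝ B s ∧ DifferentiableAt ℝ Babs s :=
    (hA.ae_differentiableAt.and (hB.ae_differentiableAt.and hBabs.ae_differentiableAt))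
  have key_ae0 : ∀ᵐ s ∂(volume.restrict (Set.Ioo 0 T)),
      HasDerivAt Z (deriv A s - deriv Babs s) s ∧
      HasDerivAt Babs (deriv Babs s) s ∧
      0 < deriv A s - deriv Babs s ∧
      |deriv Babs s| ≤ |deriv B s| ∧ 0 < deriv A s ∧
      (1 + Real.sqrt (max (Z s) 0)) * (deriv B s)^2 < (deriv A s)^2 := by
    have h1 : ∀ᵐ s ∂(volume.restrict (Set.Ioo 0 T)),
        DifferentiableAt ℝ A s ∧ DifferentiableAt ℝ B s ∧ DifferentiableAt ℝ Babs s :=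
      ae_restrict_of_ae hrad
    have h2 := (ae_mono (Measure.restrict_mono Set.Ioo_subset_Icc_self le_rfl)) hae
    have h3 : ∀ᵐ s ∂(volume.restrict (Set.Ioo 0 T)), s ∈ Set.Ioo 0 T :=
      ae_restrict_mem measurableSet_Ioo
    filter_upwards [h1, h2, h3] with s hd hyp hs
    obtain ⟨hdA, hdB, hdBabs⟩ := hd
    have hAs : (fun u => (γ u).1) =ᶠ[𝓝 s] A := by
      filter_upwards [isOpen_Ioo.mem_nhds hs] with u hu
      exact hAeq (Set.Ioo_subset_Icc_self hu)
    have hBs : (fun u => (γ u).2) =ᶠ[𝓝 s] B := by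
      filter_upwards [isOpen_Ioo.mem_nhds hs] with u hu
      exact hBeq (Set.Ioo_subset_Icc_self hu)
    rw [hAs.deriv_eq, hBs.deriv_eq] at hyp
    have hγ1 : (γ s).1 = A s := hAeq (Set.Ioo_subset_Icc_self hs)
    have hγ2 : (γ s).2 = B s := hBeq (Set.Ioo_subset_Icc_self hs)
    have hrho : rho (γ s).1 (γ s).2 = 1 + Real.sqrt (max (Z s) 0) := by
      rw [rho, hγ1, hγ2]
    obtain ⟨hapos, htl0⟩ := hyp
    rw [hrho] at htl0
    have htl : (1 + Real.sqrt (max (Z s) 0)) * (deriv B s)^2 < (deriv A s)^2 := by linarith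
    have hcb : |deriv Babs s| ≤ |deriv B s| :=
      abs_deriv_abs_le hdB.hasDerivAt hdBabs.hasDerivAt
    have hsq : 0 ≤ Real.sqrt (max (Z s) 0) := Real.sqrt_nonneg _
    have hab : |deriv B s| < deriv A s := by
      nlinarith [sq_abs (deriv B s), abs_nonneg (deriv B s), sq_nonneg (deriv B s)]
    have hac : 0 < deriv A s - deriv Babs s := by
      have h5 : deriv Babs s ≤ |deriv Babs s| := le_abs_self _
      linarith [le_trans hcb hab.le]
    exact ⟨hdA.hasDerivAt.sub hdBabs.hasDerivAt, hdBabs.hasDerivAt, hac, hcb, hapos, htl⟩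
  have key_ae : ∀ᵐ s ∂(volume.restrict (Set.Icc 0 T)),
      HasDerivAt Z (deriv A s - deriv Babs s) s ∧
      HasDerivAt Babs (deriv Babs s) s ∧
      0 < deriv A s - deriv Babs s ∧
      |deriv Babs s| ≤ |deriv B s| ∧ 0 < deriv A s ∧
      (1 + Real.sqrt (max (Z s) 0)) * (deriv B s)^2 < (deriv A s)^2 := by
    rwa [Measure.restrict_congr_set Ioo_ae_eq_Icc] at key_ae0
  -- monotonicity of Z
  have hZdnn : ∀ᵐ s ∂(volume.restrict (Set.Icc 0 T)), 0 ≤ deriv Z s := by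
    filter_upwards [key_ae] with s hs
    rw [hs.1.deriv]
    exact hs.2.2.1.le
  have hZmono : ∀ u v, 0 ≤ u → u ≤ v → v ≤ T → Z u ≤ Z v := by
    intro u v hu huv hvT
    have hftc := lip_ftc hZ huv
    have hnn : 0 ≤ ∫ s in u..v, deriv Z s := by
      apply intervalIntegral.integral_nonneg_of_ae_restrict huv
      exact ae_mono (Measure.restrict_mono (Set.Icc_subset_Icc hu hvT) le_rfl) hZdnn
    linarith
  have hZnonneg : ∀ s, 0 ≤ s → s ≤ T → 0 ≤ Z s := by
    intro s h1 h2
    have := hZmono 0 s le_rfl h1 h2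
    linarith [hZ0]
  -- Z is strictly positive on (0, T)
  have hZpos : ∀ δ, δ ∈ Set.Ioo 0 T → 0 < Z δ := by
    intro δ hδ
    rcases lt_or_ge 0 (Z δ) with h | hle
    · exact h
    have hZδ : Z δ = 0 := le_antisymm hle (hZnonneg δ hδ.1.le hδ.2.le)
    exfalso
    have hsub : Set.Ioc 0 δ ⊆ Set.Icc 0 T :=
      Set.Ioc_subset_Icc_self.trans (Set.Icc_subset_Icc le_rfl hδ.2.le)
    have hnn : (fun _ : ℝ => (0:ℝ)) ≤ᵐ[volume.restrict (Set.Ioc 0 δ)] deriv Z :=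
      ae_mono (Measure.restrict_mono hsub le_rfl) hZdnn
    have hzero : deriv Z =ᵐ[volume.restrict (Set.Ioc 0 δ)] 0 := by
      rw [← intervalIntegral.integral_eq_zero_iff_of_le_of_nonneg_ae hδ.1.le hnn
        (lip_deriv_intervalIntegrable hZ 0 δ)]
      rw [lip_ftc hZ hδ.1.le, hZδ, hZ0]
      ring
    have hpos' : ∀ᵐ s ∂volume.restrict (Set.Ioc 0 δ), 0 < deriv Z s := by
      have := ae_mono (Measure.restrict_mono hsub le_rfl) key_ae
      filter_upwards [this] with s hs
      rw [hs.1.deriv]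
      exact hs.2.2.1
    haveI : (ae (volume.restrict (Set.Ioc (0:ℝ) δ))).NeBot := by
      rw [ae_neBot, Ne, Measure.restrict_eq_zero]
      rw [Real.volume_Ioc]
      simp only [ENNReal.ofReal_eq_zero, not_le]
      linarith [hδ.1]
    obtain ⟨s, h1, h2⟩ := (hzero.and hpos').exists
    rw [h1] at h2
    exact lt_irrefl _ h2
  -- main estimate
  have main : ∀ δ, δ ∈ Set.Ioo 0 T → Babs T - Babs δ ≤ f (Z T) - f (Z δ) := by
    intro δ hδ
    have hzδpos : 0 < Z δ := hZpos δ hδ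
    set cl : ℝ → ℝ := fun s => max 0 (min s T) with hcldef
    have hclLip : LipschitzWith 1 cl := by
      have h1 := (LipschitzWith.id.min_const T).const_max (0:ℝ)
      simpa [cl] using h1
    have hZcl : LipschitzWith (((1 * K) + 1 * (1 * K)) * 1) (fun s => Z (cl s)) :=
      hZ.comp hclLip
    set m : ℝ → ℝ := fun s => max (Z (cl s)) (Z δ) with hmdef
    have hmLip : LipschitzWith (((1 * K) + 1 * (1 * K)) * 1) m := hZcl.max_const (Z δ)
    have hmmem : ∀ s, m s ∈ Set.Ici (Z δ) := fun s => Set.mem_Ici.2 (le_max_right _ _)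
    have hGLip : LipschitzWith (Real.toNNReal (derivF (Z δ)) * (((1 * K) + 1 * (1 * K)) * 1))
        (fun s => f (m s)) := lip_comp (f_lipschitzOnWith hzδpos) hmLip hmmem
    set G : ℝ → ℝ := fun s => f (m s) with hGdef
    have hGeq : ∀ s, δ ≤ s → s ≤ T → G s = f (Z s) := by
      intro s hs1 hs2
      have h1 : cl s = s := by
        simp only [cl]
        rw [min_eq_left hs2, max_eq_right (le_trans hδ.1.le hs1)]
      have h2 : Z δ ≤ Z s := hZmono δ s hδ.1.le hs1 hs2
      simp only [G, m, h1, max_eq_left h2]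
    have hae2 : ∀ᵐ s ∂volume.restrict (Set.Icc δ T), deriv Babs s ≤ deriv G s := by
      rw [← Measure.restrict_congr_set Ioo_ae_eq_Icc]
      have hsub : Set.Ioo δ T ⊆ Set.Icc 0 T :=
        Set.Ioo_subset_Icc_self.trans (Set.Icc_subset_Icc hδ.1.le le_rfl)
      have hP := ae_mono (Measure.restrict_mono hsub le_rfl) key_ae
      have hmem : ∀ᵐ s ∂volume.restrict (Set.Ioo δ T), s ∈ Set.Ioo δ T :=
        ae_restrict_mem measurableSet_Ioo
      filter_upwards [hP, hmem] with s hPs hs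
      obtain ⟨hZd, hBd, hac, hcb, hapos, htl⟩ := hPs
      have hZspos : 0 < Z s := lt_of_lt_of_le hzδpos (hZmono δ s hδ.1.le hs.1.le hs.2.le)
      have hGs : G =ᶠ[𝓝 s] (fun u => f (Z u)) := by
        filter_upwards [isOpen_Ioo.mem_nhds hs] with u hu
        exact hGeq u hu.1.le hu.2.le
      have hfd : HasDerivAt (fun u => f (Z u))
          (derivF (Z s) * (deriv A s - deriv Babs s)) s :=
        (hasDerivAt_f hZspos).comp s hZd
      have hdG : deriv G s = derivF (Z s) * (deriv A s - deriv Babs s) := by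
        rw [hGs.deriv_eq, hfd.deriv]
      rw [hdG]
      rw [max_eq_left hZspos.le] at htl
      exact key_ineq hZspos hapos htl hcb
    have hI1 := lip_ftc hBabs hδ.2.le
    have hI2 := lip_ftc hGLip hδ.2.le
    have hmono := intervalIntegral.integral_mono_ae_restrict hδ.2.le
      (lip_deriv_intervalIntegrable hBabs δ T) (lip_deriv_intervalIntegrable hGLip δ T) hae2
    rw [hI1, hI2] at hmono
    rw [hGeq T hδ.2.le le_rfl, hGeq δ le_rfl hδ.2.le] at hmono
    exact hmono
  -- limit δ → 0⁺
  have hBcont : Continuous Babs := hB.continuous.abs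
  have hZcont : Continuous Z := hZ.continuous
  have hlim1 : Tendsto (fun δ => Babs T - Babs δ) (𝓝[>] (0:ℝ)) (𝓝 (Babs T - Babs 0)) :=
    tendsto_const_nhds.sub ((hBcont.tendsto 0).mono_left nhdsWithin_le_nhds)
  have hlim2 : Tendsto (fun δ => f (Z T) - f (Z δ)) (𝓝[>] (0:ℝ))
      (𝓝 (f (Z T) - f (Z 0))) :=
    tendsto_const_nhds.sub
      (((f_continuous.comp hZcont).tendsto 0).mono_left nhdsWithin_le_nhds)
  have hev : ∀ᶠ δ in 𝓝[>] (0:ℝ), Babs T - Babs δ ≤ f (Z T) - f (Z δ) := by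
    filter_upwards [Ioo_mem_nhdsGT_of_mem (Set.left_mem_Ico.2 hT)] with δ hδ
    exact main δ hδ
  have hfin : Babs T - Babs 0 ≤ f (Z T) - f (Z 0) :=
    le_of_tendsto_of_tendsto hlim1 hlim2 hev
  have hBabs0 : Babs 0 = 0 := by simp [Babs, hB0v]
  have hBabsT : Babs T = p.2 := by simp [Babs, hBTv, abs_of_pos hx]
  rw [hBabs0, hBabsT, hZT, hZ0, f_zero, sub_zero, sub_zero] at hfin
  -- conclude
  have hlt : f (p.1 - p.2) < f (finv p.2) :=
    f_strictMonoOn (Set.mem_Ici.2 ht1.le) (h_nonneg p.2 (Set.mem_Ici.2 hx.le)) ht2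
  rw [h_right p.2 (Set.mem_Ici.2 hx.le)] at hlt
  linarith
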